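/- For all θ ∈ ℝ and all Φ ∈ [1/2, 1], the quantity G(Φ,θ) := (3/8)·sin θ·cos(Φ·(3/2 + (5/8)·cos θ)) + (3/2 + (5/8)·cos θ)·sin(Φ·(3/2 + (5/8)·cos θ)) is strictly positive. -/

import Mathlib

open Real

-- For 7/16 ≤ x ≤ 17/8, sin x ≥ sin (7/16)
lemma sin_lb {x : ℝ} (h1 : 7/16 ≤ x) (h2 : x ≤ 17/8) : Real.sin (7/16) ≤ Real.sin x := by
  have hpi : (3.141592 : ℝ) ≤ π := le_of_lt Real.pi_gt_d6
  rcases le_or_gt x (π/2) with hx | hx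
  · exact Real.sin_le_sin_of_le_of_le_pi_div_two (by linarith) hx h1
  · have : Real.sin x = Real.sin (π - x) := (Real.sin_pi_sub x).symm
    rw [this]
    exact Real.sin_le_sin_of_le_of_le_pi_div_two (by linarith) (by linarith) (by linarith)

theorem stmt_7 (θ Φ : ℝ) (h0 : 1/2 ≤ Φ) (h1 : Φ ≤ 1) :
    0 < (3/8) * Real.sin θ * Real.cos (Φ * (3/2 + (5/8) * Real.cos θ)) +
        (3/2 + (5/8) * Real.cos θ) * Real.sin (Φ * (3/2 + (5/8) * Real.cos θ)) := by
  set c : ℝ := 3/2 + (5/8) * Real.cos θ with hc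
  have hcosθ := Real.neg_one_le_cos θ
  have hcosθ' := Real.cos_le_one θ
  have hc1 : (7:ℝ)/8 ≤ c := by rw [hc]; linarith
  have hc2 : c ≤ 17/8 := by rw [hc]; linarith
  clear_value c
  set x : ℝ := Φ * c with hx
  clear_value x
  have hx1 : (7:ℝ)/16 ≤ x := by
    rw [hx]; nlinarith
  have hx2 : x ≤ 17/8 := by
    rw [hx]; nlinarith
  have hs0 : (6825:ℝ)/16384 ≤ Real.sin (7/16) := by
    have := Real.sin_gt_sub_cube (by norm_num : (0:ℝ) < 7/16)
    nlinarith
  have hs : (6825:ℝ)/16384 ≤ Real.sin x := le_trans hs0 (sin_lb hx1 hx2)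
  have hpyth := Real.sin_sq_add_cos_sq x
  have ht : Real.sin θ ^ 2 ≤ 1 := Real.sin_sq_le_one θ
  have hs1 : Real.sin x ≤ 1 := Real.sin_le_one x
  have ht1 : -1 ≤ Real.sin θ := Real.neg_one_le_sin θ
  have ht2 : Real.sin θ ≤ 1 := Real.sin_le_one θ
  have hco2 : Real.cos x ^ 2 ≤ (14900/16384 : ℝ)^2 := by nlinarith
  have hcoU : Real.cos x ≤ 14900/16384 := by nlinarith
  have hcoL : -(14900/16384 : ℝ) ≤ Real.cos x := by nlinarith
  have hprod : -(14900/16384 : ℝ) ≤ Real.sin θ * Real.cos x := by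
    nlinarith [mul_nonneg (by linarith : (0:ℝ) ≤ 1 - Real.sin θ)
        (by linarith : (0:ℝ) ≤ 14900/16384 + Real.cos x),
      mul_nonneg (by linarith : (0:ℝ) ≤ 1 + Real.sin θ)
        (by linarith : (0:ℝ) ≤ 14900/16384 - Real.cos x)]
  have hcs : (7:ℝ)/8 * (6825/16384) ≤ c * Real.sin x :=
    mul_le_mul hc1 hs (by norm_num) (by linarith)
  have hrw : (3:ℝ)/8 * Real.sin θ * Real.cos x = 3/8 * (Real.sin θ * Real.cos x) := by ring
  rw [hrw]
  linarith
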